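/- Let γ > 0 and let Q : H →L[ℝ] H satisfy T ∘ Q = Q* ∘ T* with T ∘ Q positive. Assume (a) A ∘ Q + Q* ∘ A* ⪯ 0; (b) for all u ∈ E and y ∈ H, γ²·‖u‖² + 2·⟪u, B* y⟫ + ⟪y, (Q* ∘ T*) y⟫ ≥ 0; (c) for all y ∈ H and u ∈ F, ⟪y, (T ∘ Q) y⟫ + 2·⟪y, Q* (C* u)⟫ + ‖u‖² ≥ 0. Assume that for every v̄ ∈ F there exists a strong dual trajectory with initial data v̄. Then for every v ∈ E and every primal trajectory x with initial data v, one has ‖C (x t)‖ ≤ γ · ‖v‖ for all t ≥ 0. (Theorem 3(ii) in full: the dual non-coercive Lyapunov certificate, together with well-posedness of the dual, bounds the impulse-to-peak norm of the primal PIE.) -/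

import Mathlib

open ContinuousLinearMap
open scoped RealInnerProductSpace

/-- Theorem 3(ii) in full: the dual non-coercive Lyapunov certificate, together with
well-posedness of the dual, bounds the impulse-to-peak norm of the primal PIE. -/
theorem stmt_12
    {H E F : Type*}
    [NormedAddCommGroup H] [InnerProductSpace ℝ H] [CompleteSpace H]
    [NormedAddCommGroup E] [InnerProductSpace ℝ E] [FiniteDimensional ℝ E]
    [NormedAddCommGroup F] [InnerProductSpace ℝ F] [FiniteDimensional ℝ F]
    (T A : H →L[ℝ] H) (B : E →L[ℝ] H) (C : H →L[ℝ] F)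
    (γ : ℝ) (hγ : 0 < γ)
    (Q : H →L[ℝ] H)
    (hQT : T ∘L Q = adjoint Q ∘L adjoint T)
    (hQTpos : (T ∘L Q).IsPositive)
    (ha : ((0 : H →L[ℝ] H) - (A ∘L Q + adjoint Q ∘L adjoint A)).IsPositive)
    (hb : ∀ (u : E) (y : H),
      γ ^ 2 * ‖u‖ ^ 2 + 2 * ⟪u, adjoint B y⟫ + ⟪y, (adjoint Q ∘L adjoint T) y⟫ ≥ 0)
    (hc : ∀ (y : H) (u : F),
      ⟪y, (T ∘L Q) y⟫ + 2 * ⟪y, adjoint Q (adjoint C u)⟫ + ‖u‖ ^ 2 ≥ 0)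
    (hwp : ∀ vb : F, ∃ xb xb' : ℝ → H,
      (∀ t : ℝ, HasDerivAt xb (xb' t) t) ∧
      (∀ t ≥ (0 : ℝ), adjoint T (xb' t) = adjoint A (xb t)) ∧
      adjoint T (xb 0) = adjoint C vb)
    (v : E) (x : ℝ → H)
    (hx : ∀ t ≥ (0 : ℝ), HasDerivAt (fun s => T (x s)) (A (x t)) t)
    (hx0 : T (x 0) = B v) :
    ∀ t ≥ (0 : ℝ), ‖C (x t)‖ ≤ γ * ‖v‖ := by
  intro t ht
  obtain ⟨xb, xb', hderiv, hdual, hinit⟩ := hwp (C (x t))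
  -- the pairing function is constant on [0, t]
  set g : ℝ → ℝ := fun s => ⟪xb (t - s), T (x s)⟫ with hg_def
  have hgderiv : ∀ s ∈ Set.Icc (0:ℝ) t, HasDerivAt g 0 s := by
    intro s hs
    have h1 : HasDerivAt (fun s : ℝ => xb (t - s)) (-(xb' (t - s))) s :=
      (hderiv (t - s)).comp_const_sub t s
    have h2 : HasDerivAt (fun s => T (x s)) (A (x s)) s := hx s hs.1
    have h3 := h1.inner ℝ h2
    have hts : (0:ℝ) ≤ t - s := by linarith [hs.2]
    have key : ⟪xb (t - s), A (x s)⟫ + ⟪-(xb' (t - s)), T (x s)⟫ = 0 := by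
      have e1 : ⟪xb' (t - s), T (x s)⟫ = ⟪xb (t - s), A (x s)⟫ := by
        rw [← adjoint_inner_left T, hdual (t - s) hts, adjoint_inner_left]
      rw [inner_neg_left, e1]; ring
    rw [key] at h3
    exact h3
  have hgconst : g t = g 0 :=
    constant_of_has_deriv_right_zero
      (fun s hs => (hgderiv s hs).continuousAt.continuousWithinAt)
      (fun s hs => ((hgderiv s ⟨hs.1, hs.2.le⟩).hasDerivWithinAt)) t
      (Set.right_mem_Icc.2 ht)
  -- V is antitone on [0, t]
  set V : ℝ → ℝ := fun s => ⟪xb s, (T ∘L Q) (xb s)⟫ with hV_def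
  have hVderiv : ∀ s : ℝ, HasDerivAt V
      (⟪xb s, (T ∘L Q) (xb' s)⟫ + ⟪xb' s, (T ∘L Q) (xb s)⟫) s := by
    intro s
    have h2 : HasDerivAt (fun s => (T ∘L Q) (xb s)) ((T ∘L Q) (xb' s)) s :=
      ((T ∘L Q).hasFDerivAt.comp_hasDerivAt s (hderiv s))
    exact (hderiv s).inner ℝ h2
  have hVanti : V t ≤ V 0 := by
    have : AntitoneOn V (Set.Icc 0 t) := by
      apply antitoneOn_of_deriv_nonpos (convex_Icc 0 t)
      · exact fun s _ => (hVderiv s).continuousAt.continuousWithinAt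
      · exact fun s _ => ((hVderiv s).differentiableAt).differentiableWithinAt
      · intro s hs
        rw [interior_Icc] at hs
        rw [(hVderiv s).deriv]
        have hs0 : (0:ℝ) ≤ s := hs.1.le
        have e1 : ⟪xb s, (T ∘L Q) (xb' s)⟫ = ⟪A (Q (xb s)), xb s⟫ := by
          rw [hQT]
          simp only [comp_apply]
          rw [adjoint_inner_right, hdual s hs0, adjoint_inner_right]
        have e2 : ⟪xb' s, (T ∘L Q) (xb s)⟫ = ⟪xb s, A (Q (xb s))⟫ := by
          simp only [comp_apply]
          rw [← adjoint_inner_left T, hdual s hs0, adjoint_inner_left]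
        rw [e1, e2]
        have hpos := ha.inner_nonneg_right (xb s)
        simp only [RCLike.re_to_real, sub_apply, add_apply, zero_apply, comp_apply,
          inner_sub_right, inner_add_right, inner_zero_right, adjoint_inner_right] at hpos
        linarith
    exact this (Set.left_mem_Icc.2 ht) (Set.right_mem_Icc.2 ht) ht
  -- V 0 ≤ ‖C (x t)‖ ^ 2
  have hV0 : V 0 ≤ ‖C (x t)‖ ^ 2 := by
    have h := hc (-(xb 0)) (C (x t))
    have e1 : ⟪xb 0, adjoint Q (adjoint C (C (x t)))⟫ = V 0 := by
      rw [adjoint_inner_right, ← hinit, adjoint_inner_right, hV_def]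
      simp only [comp_apply]
      exact real_inner_comm _ _
    simp only [inner_neg_left, inner_neg_neg, map_neg, inner_neg_right] at h
    rw [e1] at h
    simp only [hV_def] at h ⊢
    linarith
  -- ‖B* xb t‖ ^ 2 ≤ γ ^ 2 * V t
  have hBt : ‖adjoint B (xb t)‖ ^ 2 ≤ γ ^ 2 * V t := by
    have h := hb (-((γ ^ 2)⁻¹ • adjoint B (xb t))) (xb t)
    rw [← hQT] at h
    have hγ2 : (0:ℝ) < γ ^ 2 := by positivity
    simp only [inner_neg_left, inner_smul_left, norm_neg, norm_smul,
      RCLike.star_def, starRingEnd_apply, star_trivial, real_inner_self_eq_norm_sq,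
      Real.norm_eq_abs, abs_inv] at h
    rw [abs_of_pos hγ2] at h
    have key : γ ^ 2 * ((γ ^ 2)⁻¹ * ‖adjoint B (xb t)‖) ^ 2
        - 2 * ((γ ^ 2)⁻¹ * ‖adjoint B (xb t)‖ ^ 2) + V t ≥ 0 := by
      simpa [mul_pow, hV_def, sub_eq_add_neg] using h
    have expand : γ ^ 2 * ((γ ^ 2)⁻¹ * ‖adjoint B (xb t)‖) ^ 2
        = (γ ^ 2)⁻¹ * ‖adjoint B (xb t)‖ ^ 2 := by
      field_simp
    rw [expand] at key
    have : (γ ^ 2)⁻¹ * ‖adjoint B (xb t)‖ ^ 2 ≤ V t := by linarith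
    calc ‖adjoint B (xb t)‖ ^ 2 = γ ^ 2 * ((γ ^ 2)⁻¹ * ‖adjoint B (xb t)‖ ^ 2) := by
          field_simp
      _ ≤ γ ^ 2 * V t := mul_le_mul_of_nonneg_left this (by positivity)
  -- conclude
  have hgt : g t = ‖C (x t)‖ ^ 2 := by
    simp only [hg_def, sub_self]
    rw [← adjoint_inner_left T, hinit, adjoint_inner_left,
      real_inner_self_eq_norm_sq]
  have hg0 : g 0 = ⟪adjoint B (xb t), v⟫ := by
    simp only [hg_def, sub_zero, hx0]
    rw [adjoint_inner_left]
  have hfinal : ‖C (x t)‖ ^ 2 ≤ ‖adjoint B (xb t)‖ * ‖v‖ := by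
    rw [← hgt, hgconst, hg0]
    exact real_inner_le_norm _ _
  have hBle : ‖adjoint B (xb t)‖ ≤ γ * ‖C (x t)‖ := by
    have h1 : ‖adjoint B (xb t)‖ ^ 2 ≤ γ ^ 2 * ‖C (x t)‖ ^ 2 := by
      calc ‖adjoint B (xb t)‖ ^ 2 ≤ γ ^ 2 * V t := hBt
        _ ≤ γ ^ 2 * V 0 := mul_le_mul_of_nonneg_left hVanti (by positivity)
        _ ≤ γ ^ 2 * ‖C (x t)‖ ^ 2 := mul_le_mul_of_nonneg_left hV0 (by positivity)
    nlinarith [norm_nonneg (adjoint B (xb t)), norm_nonneg (C (x t)), hγ.le,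
      mul_nonneg hγ.le (norm_nonneg (C (x t)))]
  rcases eq_or_lt_of_le (norm_nonneg (C (x t))) with h0 | h0
  · rw [← h0]; positivity
  · have : ‖C (x t)‖ ^ 2 ≤ γ * ‖C (x t)‖ * ‖v‖ := by
      calc ‖C (x t)‖ ^ 2 ≤ ‖adjoint B (xb t)‖ * ‖v‖ := hfinal
        _ ≤ γ * ‖C (x t)‖ * ‖v‖ := by
          exact mul_le_mul_of_nonneg_right hBle (norm_nonneg v)
    have h2 : ‖C (x t)‖ * ‖C (x t)‖ ≤ ‖C (x t)‖ * (γ * ‖v‖) := by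
      rw [pow_two] at this
      calc ‖C (x t)‖ * ‖C (x t)‖ ≤ γ * ‖C (x t)‖ * ‖v‖ := this
        _ = ‖C (x t)‖ * (γ * ‖v‖) := by ring
    exact le_of_mul_le_mul_left h2 h0
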